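/- Suppose μ, σ satisfy: ‖μ(t,t,0)‖ ≤ ℓ_a(0), ‖μ'(t,s,0)‖ ≤ ℓ_a'(t−s), ‖μ(t,t,u₁)−μ(t,t,u₂)‖ ≤ ℓ_a(0)‖u₁−u₂‖, ‖μ'(t,s,u₁)−μ'(t,s,u₂)‖ ≤ ℓ_a'(t−s)‖u₁−u₂‖ for some ℓ_a ∈ H_w(ℝ), and analogously for σ with ℓ_b (in operator norm). Then the lifted coefficient a(t,h) := μ(t+·,t,h(0)) satisfies the Lipschitz bound ‖a(t,h₁)−a(t,h₂)‖_w ≤ ‖ℓ_a‖_{H_w(ℝ)}‖δ₀‖_op‖h₁−h₂‖_w and the growth bound ‖a(t,0)‖_w ≤ ‖ℓ_a‖_{H_w(ℝ)}, and similarly for b(t,h) := σ(t+·,t,h(0)). -/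

import Mathlib

open MeasureTheory Set Filter Real

/-- Membership in the weighted space `H_w` of functions with values in a normed space. -/
def MemHw {E : Type*} [NormedAddCommGroup E] [NormedSpace ℝ E]
    (w : ℝ → ℝ) (f f' : ℝ → E) : Prop :=
  (∀ y ∈ Ici (0:ℝ), IntervalIntegrable f' volume 0 y) ∧
  (∀ y ∈ Ici (0:ℝ), f y = f 0 + ∫ s in (0:ℝ)..y, f' s) ∧
  IntegrableOn (fun y => w y * ‖f' y‖ ^ 2) (Ioi 0)


open MeasureTheory Set Filter Real in
lemma aux_integral_bound {E : Type*} [NormedAddCommGroup E]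
    (w g : ℝ → ℝ) (f : ℝ → E) (c : ℝ)
    (hw : ∀ s ∈ Ioi (0:ℝ), 0 ≤ w s)
    (hint : IntegrableOn (fun s => w s * (g s) ^ 2) (Ioi 0))
    (hbd : ∀ s ∈ Ioi (0:ℝ), ‖f s‖ ≤ g s * c) :
    ∫ s in Ioi (0:ℝ), w s * ‖f s‖ ^ 2
      ≤ (∫ s in Ioi (0:ℝ), w s * (g s) ^ 2) * c ^ 2 := by
  have h := integral_mono_of_nonneg (μ := volume.restrict (Ioi (0:ℝ)))
      (f := fun s => w s * ‖f s‖ ^ 2) (g := fun s => w s * (g s) ^ 2 * c ^ 2)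
      ?_ (hint.mul_const _) ?_
  · calc _ ≤ ∫ s in Ioi (0:ℝ), w s * (g s) ^ 2 * c ^ 2 := h
      _ = _ := integral_mul_const _ _
  · filter_upwards [ae_restrict_mem measurableSet_Ioi] with s hs
    exact mul_nonneg (hw s hs) (by positivity)
  · filter_upwards [ae_restrict_mem measurableSet_Ioi] with s hs
    have h1 : ‖f s‖ ^ 2 ≤ (g s * c) ^ 2 :=
      pow_le_pow_left₀ (norm_nonneg _) (hbd s hs) 2
    have := mul_le_mul_of_nonneg_left h1 (hw s hs)
    nlinarith [this]

/-- Proposition 4.7 of the paper: under pointwise Lipschitz/growth bounds on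
`μ, σ` and their first-variable derivatives `μ', σ'` in terms of `ℓ_a, ℓ_b ∈ H_w(ℝ)`, the
lifted coefficients `a(t,h) = μ(t+·,t,h(0))`, `b(t,h) = σ(t+·,t,h(0))` satisfy Lipschitz
and linear growth bounds in the `H_w`-norm with constants
`L_a = ‖ℓ_a‖_{H_w(ℝ)}‖δ₀‖`, `K_a = ‖ℓ_a‖_{H_w(ℝ)}` (and similarly for `b`). -/
theorem stmt_14 {U V : Type*} [NormedAddCommGroup U] [InnerProductSpace ℝ U]
    [CompleteSpace U] [SecondCountableTopology U]
    [NormedAddCommGroup V] [InnerProductSpace ℝ V] [CompleteSpace V]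
    (w : ℝ → ℝ) (hw_cont : Continuous w) (hw_mono : MonotoneOn w (Ici 0))
    (hw0 : w 0 = 1)
    (hw_inv : IntegrableOn (fun s => (w s)⁻¹) (Ioi 0))
    (μ μ' : ℝ → ℝ → U → U) (σ σ' : ℝ → ℝ → U → (V →L[ℝ] U))
    (ℓa ℓa' ℓb ℓb' : ℝ → ℝ)
    (hℓa : MemHw w ℓa ℓa') (hℓb : MemHw w ℓb ℓb')
    (hμ0 : ∀ t ≥ (0:ℝ), ‖μ t t 0‖ ≤ ℓa 0)
    (hμ'0 : ∀ t s : ℝ, 0 ≤ s → s ≤ t → ‖μ' t s 0‖ ≤ ℓa' (t - s))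
    (hμLip : ∀ t ≥ (0:ℝ), ∀ u₁ u₂ : U, ‖μ t t u₁ - μ t t u₂‖ ≤ ℓa 0 * ‖u₁ - u₂‖)
    (hμ'Lip : ∀ t s : ℝ, 0 ≤ s → s ≤ t →
      ∀ u₁ u₂ : U, ‖μ' t s u₁ - μ' t s u₂‖ ≤ ℓa' (t - s) * ‖u₁ - u₂‖)
    (hσ0 : ∀ t ≥ (0:ℝ), ‖σ t t 0‖ ≤ ℓb 0)
    (hσ'0 : ∀ t s : ℝ, 0 ≤ s → s ≤ t → ‖σ' t s 0‖ ≤ ℓb' (t - s))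
    (hσLip : ∀ t ≥ (0:ℝ), ∀ u₁ u₂ : U, ‖σ t t u₁ - σ t t u₂‖ ≤ ℓb 0 * ‖u₁ - u₂‖)
    (hσ'Lip : ∀ t s : ℝ, 0 ≤ s → s ≤ t →
      ∀ u₁ u₂ : U, ‖σ' t s u₁ - σ' t s u₂‖ ≤ ℓb' (t - s) * ‖u₁ - u₂‖) :
    ∀ t ≥ (0:ℝ),
      -- Lipschitz bound for a(t,·) in terms of the boundary values u_i = δ₀ h_i :
      (∀ u₁ u₂ : U,
        ‖μ t t u₁ - μ t t u₂‖ ^ 2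
            + ∫ s in Ioi (0:ℝ), w s * ‖μ' (t + s) t u₁ - μ' (t + s) t u₂‖ ^ 2
          ≤ ((ℓa 0) ^ 2 + ∫ s in Ioi (0:ℝ), w s * (ℓa' s) ^ 2) * ‖u₁ - u₂‖ ^ 2) ∧
      -- growth bound ‖a(t,0)‖²_w ≤ ‖ℓ_a‖²
      (‖μ t t 0‖ ^ 2 + ∫ s in Ioi (0:ℝ), w s * ‖μ' (t + s) t 0‖ ^ 2
        ≤ (ℓa 0) ^ 2 + ∫ s in Ioi (0:ℝ), w s * (ℓa' s) ^ 2) ∧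
      -- the same bounds for b(t,·)
      (∀ u₁ u₂ : U,
        ‖σ t t u₁ - σ t t u₂‖ ^ 2
            + ∫ s in Ioi (0:ℝ), w s * ‖σ' (t + s) t u₁ - σ' (t + s) t u₂‖ ^ 2
          ≤ ((ℓb 0) ^ 2 + ∫ s in Ioi (0:ℝ), w s * (ℓb' s) ^ 2) * ‖u₁ - u₂‖ ^ 2) ∧
      (‖σ t t 0‖ ^ 2 + ∫ s in Ioi (0:ℝ), w s * ‖σ' (t + s) t 0‖ ^ 2
        ≤ (ℓb 0) ^ 2 + ∫ s in Ioi (0:ℝ), w s * (ℓb' s) ^ 2) ∧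
      -- combined with ‖δ₀ h₁ − δ₀ h₂‖² ≤ ‖δ₀‖²‖h₁ − h₂‖²_w , ‖δ₀‖² = 1 + ∫₀^∞ w⁻¹ :
      (∀ h₁ h₁' h₂ h₂' : ℝ → U, MemHw w h₁ h₁' → MemHw w h₂ h₂' →
        ‖μ t t (h₁ 0) - μ t t (h₂ 0)‖ ^ 2
            + ∫ s in Ioi (0:ℝ), w s * ‖μ' (t + s) t (h₁ 0) - μ' (t + s) t (h₂ 0)‖ ^ 2
          ≤ ((ℓa 0) ^ 2 + ∫ s in Ioi (0:ℝ), w s * (ℓa' s) ^ 2)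
            * (1 + ∫ s in Ioi (0:ℝ), (w s)⁻¹)
            * (‖h₁ 0 - h₂ 0‖ ^ 2
                + ∫ s in Ioi (0:ℝ), w s * ‖h₁' s - h₂' s‖ ^ 2)) := by

  intro t ht
  have hw' : ∀ s ∈ Ioi (0:ℝ), 0 ≤ w s := by
    intro s hs
    have h1 : w 0 ≤ w s := hw_mono (Set.mem_Ici.mpr (le_refl 0)) (Set.mem_Ici.mpr (le_of_lt (Set.mem_Ioi.mp hs))) (le_of_lt hs)
    rw [hw0] at h1; linarith
  have hinta : IntegrableOn (fun s => w s * (ℓa' s) ^ 2) (Ioi 0) := by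
    simpa [Real.norm_eq_abs, sq_abs] using hℓa.2.2
  have hintb : IntegrableOn (fun s => w s * (ℓb' s) ^ 2) (Ioi 0) := by
    simpa [Real.norm_eq_abs, sq_abs] using hℓb.2.2
  have key_a : ∀ u₁ u₂ : U,
      ‖μ t t u₁ - μ t t u₂‖ ^ 2
          + ∫ s in Ioi (0:ℝ), w s * ‖μ' (t + s) t u₁ - μ' (t + s) t u₂‖ ^ 2
        ≤ ((ℓa 0) ^ 2 + ∫ s in Ioi (0:ℝ), w s * (ℓa' s) ^ 2) * ‖u₁ - u₂‖ ^ 2 := by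
    intro u₁ u₂
    have hb : ‖μ t t u₁ - μ t t u₂‖ ^ 2 ≤ (ℓa 0) ^ 2 * ‖u₁ - u₂‖ ^ 2 := by
      have h1 := pow_le_pow_left₀ (norm_nonneg _) (hμLip t ht u₁ u₂) 2
      calc ‖μ t t u₁ - μ t t u₂‖ ^ 2 ≤ (ℓa 0 * ‖u₁ - u₂‖) ^ 2 := h1
        _ = (ℓa 0) ^ 2 * ‖u₁ - u₂‖ ^ 2 := by ring
    have hi := aux_integral_bound w ℓa'
        (fun s => μ' (t + s) t u₁ - μ' (t + s) t u₂) ‖u₁ - u₂‖ hw' hinta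
        (fun s hs => by
          have h2 := hμ'Lip (t + s) t ht (by linarith [hs.out]) u₁ u₂
          simpa [add_sub_cancel_left] using h2)
    calc _ ≤ (ℓa 0) ^ 2 * ‖u₁ - u₂‖ ^ 2
          + (∫ s in Ioi (0:ℝ), w s * (ℓa' s) ^ 2) * ‖u₁ - u₂‖ ^ 2 :=
        add_le_add hb hi
      _ = _ := by ring
  have key_b : ∀ u₁ u₂ : U,
      ‖σ t t u₁ - σ t t u₂‖ ^ 2
          + ∫ s in Ioi (0:ℝ), w s * ‖σ' (t + s) t u₁ - σ' (t + s) t u₂‖ ^ 2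
        ≤ ((ℓb 0) ^ 2 + ∫ s in Ioi (0:ℝ), w s * (ℓb' s) ^ 2) * ‖u₁ - u₂‖ ^ 2 := by
    intro u₁ u₂
    have hb : ‖σ t t u₁ - σ t t u₂‖ ^ 2 ≤ (ℓb 0) ^ 2 * ‖u₁ - u₂‖ ^ 2 := by
      have h1 := pow_le_pow_left₀ (norm_nonneg _) (hσLip t ht u₁ u₂) 2
      calc ‖σ t t u₁ - σ t t u₂‖ ^ 2 ≤ (ℓb 0 * ‖u₁ - u₂‖) ^ 2 := h1
        _ = (ℓb 0) ^ 2 * ‖u₁ - u₂‖ ^ 2 := by ring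
    have hi := aux_integral_bound w ℓb'
        (fun s => σ' (t + s) t u₁ - σ' (t + s) t u₂) ‖u₁ - u₂‖ hw' hintb
        (fun s hs => by
          have h2 := hσ'Lip (t + s) t ht (by linarith [hs.out]) u₁ u₂
          simpa [add_sub_cancel_left] using h2)
    calc _ ≤ (ℓb 0) ^ 2 * ‖u₁ - u₂‖ ^ 2
          + (∫ s in Ioi (0:ℝ), w s * (ℓb' s) ^ 2) * ‖u₁ - u₂‖ ^ 2 :=
        add_le_add hb hi
      _ = _ := by ring
  refine ⟨key_a, ?_, key_b, ?_, ?_⟩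
  · have hb : ‖μ t t 0‖ ^ 2 ≤ (ℓa 0) ^ 2 :=
      pow_le_pow_left₀ (norm_nonneg _) (hμ0 t ht) 2
    have hi := aux_integral_bound w ℓa' (fun s => μ' (t + s) t 0) 1 hw' hinta
        (fun s hs => by
          have h2 := hμ'0 (t + s) t ht (by linarith [hs.out])
          simpa [add_sub_cancel_left] using h2)
    simp only [one_pow, mul_one] at hi
    exact add_le_add hb hi
  · have hb : ‖σ t t 0‖ ^ 2 ≤ (ℓb 0) ^ 2 :=
      pow_le_pow_left₀ (norm_nonneg _) (hσ0 t ht) 2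
    have hi := aux_integral_bound w ℓb' (fun s => σ' (t + s) t 0) 1 hw' hintb
        (fun s hs => by
          have h2 := hσ'0 (t + s) t ht (by linarith [hs.out])
          simpa [add_sub_cancel_left] using h2)
    simp only [one_pow, mul_one] at hi
    exact add_le_add hb hi
  · intro h₁ h₁' h₂ h₂' _ _
    have h1 := key_a (h₁ 0) (h₂ 0)
    set A := (ℓa 0) ^ 2 + ∫ s in Ioi (0:ℝ), w s * (ℓa' s) ^ 2 with hA
    set X := ‖h₁ 0 - h₂ 0‖ ^ 2 with hX
    set Y := ∫ s in Ioi (0:ℝ), w s * ‖h₁' s - h₂' s‖ ^ 2 with hY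
    set C := ∫ s in Ioi (0:ℝ), (w s)⁻¹ with hC
    have hAnn : 0 ≤ A := by
      have : (0:ℝ) ≤ ∫ s in Ioi (0:ℝ), w s * (ℓa' s) ^ 2 :=
        setIntegral_nonneg measurableSet_Ioi
          (fun s hs => mul_nonneg (hw' s hs) (by positivity))
      positivity
    have hXnn : (0:ℝ) ≤ X := by positivity
    have hYnn : (0:ℝ) ≤ Y :=
      setIntegral_nonneg measurableSet_Ioi
        (fun s hs => mul_nonneg (hw' s hs) (by positivity))
    have hCnn : (0:ℝ) ≤ C :=
      setIntegral_nonneg measurableSet_Ioi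
        (fun s hs => inv_nonneg.mpr (hw' s hs))
    have h2 : A * X ≤ A * (1 + C) * (X + Y) := by
      nlinarith [mul_nonneg (mul_nonneg hAnn hCnn) hXnn,
        mul_nonneg hAnn hYnn, mul_nonneg (mul_nonneg hAnn hCnn) hYnn]
    exact le_trans h1 h2
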